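/- For all positive integers k, l, m, the tree G(k, l, m) has exactly klm + 2kl + k + 1 vertices and its total domination number equals 2kl + 1, i.e., γ_t(G(k,l,m)) = 2kl + 1. -/
import Mathlib


/-- A set `D` of vertices is a total dominating set if every vertex has a neighbour in `D`. -/
def IsTotalDominatingSet {V : Type*} (G : SimpleGraph V) (D : Finset V) : Prop :=
  ∀ v : V, ∃ w ∈ D, G.Adj v w

/-- The total domination number: the minimum size of a total dominating set. -/
noncomputable def totalDominationNumber {V : Type*} [Fintype V] (G : SimpleGraph V) : ℕ :=
  sInf {n | ∃ D : Finset V, IsTotalDominatingSet G D ∧ D.card = n}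

/-- The number of minimum total dominating sets. -/
noncomputable def numMinTotalDomSets {V : Type*} [Fintype V] (G : SimpleGraph V) : ℕ :=
  Set.ncard {D : Finset V | IsTotalDominatingSet G D ∧ D.card = totalDominationNumber G}

/-- The tree `G(k,l,m)`: root `y`, children `x_a` (`a : Fin k`), grandchildren `w_{a,b}`
(`b : Fin l`), each `w_{a,b}` with a single child `v_{a,b}`, each `v_{a,b}` with `m` leaves
`u_{a,b,c}` (`c : Fin m`). -/
def Gklm (k l m : ℕ) :
    SimpleGraph (Unit ⊕ (Fin k ⊕ ((Fin k × Fin l) ⊕ ((Fin k × Fin l) ⊕ (Fin k × Fin l × Fin m))))) :=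
  SimpleGraph.fromRel (fun p q =>
    (∃ a : Fin k, p = Sum.inl () ∧ q = Sum.inr (Sum.inl a)) ∨
    (∃ (a : Fin k) (b : Fin l),
      p = Sum.inr (Sum.inl a) ∧ q = Sum.inr (Sum.inr (Sum.inl (a, b)))) ∨
    (∃ (a : Fin k) (b : Fin l),
      p = Sum.inr (Sum.inr (Sum.inl (a, b))) ∧
      q = Sum.inr (Sum.inr (Sum.inr (Sum.inl (a, b))))) ∨
    (∃ (a : Fin k) (b : Fin l) (c : Fin m),
      p = Sum.inr (Sum.inr (Sum.inr (Sum.inl (a, b)))) ∧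
      q = Sum.inr (Sum.inr (Sum.inr (Sum.inr (a, b, c))))))

namespace GklmAux

abbrev Vt (k l m : ℕ) := Unit ⊕ (Fin k ⊕ ((Fin k × Fin l) ⊕ ((Fin k × Fin l) ⊕ (Fin k × Fin l × Fin m))))

variable {k l m : ℕ}

def vy : Vt k l m := Sum.inl ()
def vx (a : Fin k) : Vt k l m := Sum.inr (Sum.inl a)
def vw (p : Fin k × Fin l) : Vt k l m := Sum.inr (Sum.inr (Sum.inl p))
def vv (p : Fin k × Fin l) : Vt k l m := Sum.inr (Sum.inr (Sum.inr (Sum.inl p)))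
def vu (p : Fin k × Fin l × Fin m) : Vt k l m := Sum.inr (Sum.inr (Sum.inr (Sum.inr p)))

lemma adj_y (z : Vt k l m) : (Gklm k l m).Adj vy z ↔ ∃ a, z = vx a := by
  simp only [Gklm, SimpleGraph.fromRel_adj, vy, vx]; aesop

lemma adj_x (a : Fin k) (z : Vt k l m) :
    (Gklm k l m).Adj (vx a) z ↔ z = vy ∨ ∃ b, z = vw (a, b) := by
  simp only [Gklm, SimpleGraph.fromRel_adj, vy, vx, vw]; aesop

lemma adj_w (p : Fin k × Fin l) (z : Vt k l m) :
    (Gklm k l m).Adj (vw p) z ↔ z = vx p.1 ∨ z = vv p := by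
  simp only [Gklm, SimpleGraph.fromRel_adj, vx, vw, vv]; aesop

lemma adj_v (p : Fin k × Fin l) (z : Vt k l m) :
    (Gklm k l m).Adj (vv p) z ↔ z = vw p ∨ ∃ c, z = vu (p.1, p.2, c) := by
  simp only [Gklm, SimpleGraph.fromRel_adj, vw, vv, vu]; aesop

lemma adj_u (q : Fin k × Fin l × Fin m) (z : Vt k l m) :
    (Gklm k l m).Adj (vu q) z ↔ z = vv (q.1, q.2.1) := by
  simp only [Gklm, SimpleGraph.fromRel_adj, vv, vu]; aesop

/-- the upper-bound set, parameterized by a choice of `x`-vertex -/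
def gUp (a0 : Fin k) : Unit ⊕ (Fin k × Fin l) ⊕ (Fin k × Fin l) → Vt k l m
  | Sum.inl _ => vx a0
  | Sum.inr (Sum.inl p) => vw p
  | Sum.inr (Sum.inr p) => vv p

lemma gUp_inj (a0 : Fin k) : Function.Injective (gUp (l := l) (m := m) a0) := by
  intro s t h
  rcases s with _ | (p | p) <;> rcases t with _ | (q | q) <;>
    simp_all [gUp, vx, vw, vv]

theorem upper (hk : 0 < k) (hl : 0 < l) :
    ∃ D : Finset (Vt k l m), IsTotalDominatingSet (Gklm k l m) D ∧ D.card = 2 * (k * l) + 1 := by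
  set a0 : Fin k := ⟨0, hk⟩
  set b0 : Fin l := ⟨0, hl⟩
  refine ⟨Finset.univ.image (gUp a0), ?_, ?_⟩
  · intro z
    have hmem : ∀ s, gUp (l := l) (m := m) a0 s ∈ Finset.univ.image (gUp a0) :=
      fun s => Finset.mem_image.2 ⟨s, Finset.mem_univ _, rfl⟩
    rcases z with _ | (a | (p | (p | q)))
    · exact ⟨vx a0, hmem (Sum.inl ()), (adj_y _).2 ⟨a0, rfl⟩⟩
    · refine ⟨vw (a, b0), hmem (Sum.inr (Sum.inl (a, b0))), (adj_x a _).2 (Or.inr ⟨b0, rfl⟩)⟩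
    · exact ⟨vv p, hmem (Sum.inr (Sum.inr p)), (adj_w p _).2 (Or.inr rfl)⟩
    · exact ⟨vw p, hmem (Sum.inr (Sum.inl p)), (adj_v p _).2 (Or.inl rfl)⟩
    · exact ⟨vv (q.1, q.2.1), hmem (Sum.inr (Sum.inr (q.1, q.2.1))), (adj_u q _).2 rfl⟩
  · rw [Finset.card_image_of_injective _ (gUp_inj a0), Finset.card_univ]
    simp [Fintype.card_sum, Fintype.card_prod]
    ring

theorem lower (hm : 0 < m) (D : Finset (Vt k l m))
    (hD : IsTotalDominatingSet (Gklm k l m) D) : 2 * (k * l) + 1 ≤ D.card := by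
  classical
  -- every v is in D
  have hv : ∀ p : Fin k × Fin l, vv p ∈ D := by
    intro p
    obtain ⟨z, hz, hadj⟩ := hD (vu (p.1, p.2, ⟨0, hm⟩))
    rw [adj_u] at hadj
    exact hadj ▸ hz
  -- witnesses for the v's and for y
  choose W hWD hWadj using fun p : Fin k × Fin l => hD (vv p)
  obtain ⟨Y, hYD, hYadj⟩ := hD vy
  obtain ⟨a0, hY⟩ := (adj_y Y).1 hYadj
  have hW : ∀ p, W p = vw p ∨ ∃ c, W p = vu (p.1, p.2, c) := fun p => (adj_v p _).1 (hWadj p)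
  set f : (Fin k × Fin l) ⊕ (Fin k × Fin l) ⊕ Unit → Vt k l m := fun s =>
    match s with
    | Sum.inl p => vv p
    | Sum.inr (Sum.inl p) => W p
    | Sum.inr (Sum.inr _) => Y with hf
  have hfD : ∀ s ∈ Finset.univ, f s ∈ D := by
    rintro (p | (p | _)) _
    · exact hv p
    · exact hWD p
    · exact hYD
  have hinj : Set.InjOn f ↑(Finset.univ : Finset ((Fin k × Fin l) ⊕ (Fin k × Fin l) ⊕ Unit)) := by
    intro s _ t _ h
    rcases s with p | (p | s) <;> rcases t with q | (q | t)
    · simp only [hf, vv] at h; simp_all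
    · exfalso; rcases hW q with hq | ⟨c, hq⟩ <;> simp_all [hf, vv, vw, vu]
    · exfalso; simp_all [hf, vv, vx]
    · exfalso; rcases hW p with hp | ⟨c, hp⟩ <;> simp_all [hf, vv, vw, vu]
    · rcases hW p with hp | ⟨c, hp⟩ <;> rcases hW q with hq | ⟨c', hq⟩ <;>
        simp_all [hf, vw, vu] <;> simp_all [Prod.ext_iff]
    · exfalso; rcases hW p with hp | ⟨c, hp⟩ <;> simp_all [hf, vw, vu, vx]
    · exfalso; simp_all [hf, vv, vx]
    · exfalso; rcases hW q with hq | ⟨c, hq⟩ <;> simp_all [hf, vw, vu, vx]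
    · simp
  have hcard := Finset.card_le_card_of_injOn f hfD hinj
  simp only [Finset.card_univ, Fintype.card_sum, Fintype.card_prod, Fintype.card_unit, Fintype.card_fin] at hcard
  omega

end GklmAux


/-- `G(k,l,m)` has `klm + 2kl + k + 1` vertices and total domination number `2kl + 1`. -/
theorem Gklm_card_and_totalDominationNumber (k l m : ℕ)
    (hk : 0 < k) (hl : 0 < l) (hm : 0 < m) :
    Fintype.card
        (Unit ⊕ (Fin k ⊕ ((Fin k × Fin l) ⊕ ((Fin k × Fin l) ⊕ (Fin k × Fin l × Fin m)))))
      = k * l * m + 2 * (k * l) + k + 1 ∧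
    totalDominationNumber (Gklm k l m) = 2 * (k * l) + 1 := by
  constructor
  · simp [Fintype.card_sum, Fintype.card_prod, Fintype.card_fin]
    ring
  · unfold totalDominationNumber
    refine le_antisymm (Nat.sInf_le (GklmAux.upper hk hl)) ?_
    refine le_csInf ⟨2 * (k * l) + 1, GklmAux.upper hk hl⟩ ?_
    rintro n ⟨D, hD, rfl⟩
    exact GklmAux.lower hm D hD
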